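/- Suppose there exists γ* ∈ Γ₁ with A[γ*] ≻ 0 and Γ° is facially exposed. Let (x,t) ∈ S_SDP with 2t = sup_{γ∈Γ₁}[γ,q(x)], and let f be such that (1,f) lies in the relative interior of F(x,t) := Γ ∩ (q(x)−2te₀)^⊥. Then R'(x,t) = {(x',t') : x' ∈ ker(A[f]) and ⟨A[η]x + b[η], x'⟩ − t' = 0 for all η with (1,η) ∈ G(x,t)^⊥}. -/

import Mathlib

noncomputable section
open Matrix Set

/-- Dot-product style inner product on `ℝ × (Fin m → ℝ)` (i.e. `ℝ^{1+m}`). -/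
def ipr {m : ℕ} (v w : ℝ × (Fin m → ℝ)) : ℝ := v.1 * w.1 + v.2 ⬝ᵥ w.2

/-- `A(γ₀, γ) = γ₀ A₀ + ∑ i, γ i • A i`. -/
def Amix {ι : Type*} [Fintype ι] {m : ℕ} (A0 : Matrix ι ι ℝ)
    (A : Fin m → Matrix ι ι ℝ) (g0 : ℝ) (g : Fin m → ℝ) : Matrix ι ι ℝ :=
  g0 • A0 + ∑ i, g i • A i

/-- `b(γ) = b₀ + ∑ i, γ i • b i` (the `γ₀ = 1` slice). -/
def bmix {ι : Type*} {m : ℕ} (b0 : ι → ℝ) (b : Fin m → ι → ℝ) (g : Fin m → ℝ) : ι → ℝ :=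
  b0 + ∑ i, g i • b i

/-- The cone of convex Lagrange multipliers `Γ`. -/
def Gamma {ι : Type*} [Fintype ι] {m : ℕ} (A0 : Matrix ι ι ℝ)
    (A : Fin m → Matrix ι ι ℝ) : Set (ℝ × (Fin m → ℝ)) :=
  {p | 0 ≤ p.1 ∧ (∀ i, 0 ≤ p.2 i) ∧ (Amix A0 A p.1 p.2).PosSemidef}

/-- The slice `Γ₁` of `Γ` at `γ₀ = 1`. -/
def Gamma1 {ι : Type*} [Fintype ι] {m : ℕ} (A0 : Matrix ι ι ℝ)
    (A : Fin m → Matrix ι ι ℝ) : Set (Fin m → ℝ) :=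
  {g | (∀ i, 0 ≤ g i) ∧ (Amix A0 A 1 g).PosSemidef}

/-- Polar cone with respect to `ipr`. -/
def polarCone {m : ℕ} (S : Set (ℝ × (Fin m → ℝ))) : Set (ℝ × (Fin m → ℝ)) :=
  {v | ∀ w ∈ S, ipr v w ≤ 0}

/-- The quadratic function `x ↦ xᵀ M x + 2 bᵀ x + c`. -/
def quadF {ι : Type*} [Fintype ι] (M : Matrix ι ι ℝ) (b : ι → ℝ) (c : ℝ) (x : ι → ℝ) : ℝ :=
  x ⬝ᵥ M.mulVec x + 2 * (b ⬝ᵥ x) + c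

/-- The vector `q(x) = (q₀(x), q₁(x), …, q_m(x)) ∈ ℝ^{1+m}`. -/
def qVec {ι : Type*} [Fintype ι] {m : ℕ} (A0 : Matrix ι ι ℝ) (b0 : ι → ℝ) (c0 : ℝ)
    (A : Fin m → Matrix ι ι ℝ) (b : Fin m → ι → ℝ) (c : Fin m → ℝ)
    (x : ι → ℝ) : ℝ × (Fin m → ℝ) :=
  (quadF A0 b0 c0 x, fun i => quadF (A i) (b i) (c i) x)

/-- The first unit vector `e₀ ∈ ℝ^{1+m}`. -/
def e0 {m : ℕ} : ℝ × (Fin m → ℝ) := (1, 0)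

/-- `[γ, q(x)] = q₀(x) + ∑ i, γ i * q i (x)`. -/
def brkt {ι : Type*} [Fintype ι] {m : ℕ} (A0 : Matrix ι ι ℝ) (b0 : ι → ℝ) (c0 : ℝ)
    (A : Fin m → Matrix ι ι ℝ) (b : Fin m → ι → ℝ) (c : Fin m → ℝ)
    (g : Fin m → ℝ) (x : ι → ℝ) : ℝ :=
  quadF A0 b0 c0 x + ∑ i, g i * quadF (A i) (b i) (c i) x

/-- The projected SDP relaxation `S_SDP = {(x,t) : q(x) - 2t e₀ ∈ Γ°}`. -/
def SSDP {ι : Type*} [Fintype ι] {m : ℕ} (A0 : Matrix ι ι ℝ) (b0 : ι → ℝ) (c0 : ℝ)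
    (A : Fin m → Matrix ι ι ℝ) (b : Fin m → ι → ℝ) (c : Fin m → ℝ) :
    Set ((ι → ℝ) × ℝ) :=
  {p | qVec A0 b0 c0 A b c p.1 - (2 * p.2) • e0 ∈ polarCone (Gamma A0 A)}

/-- The QCQP epigraph `S = {(x,t) : q₀(x) ≤ 2t, q i (x) ≤ 0 ∀ i}`. -/
def Sepi {ι : Type*} [Fintype ι] {m : ℕ} (A0 : Matrix ι ι ℝ) (b0 : ι → ℝ) (c0 : ℝ)
    (A : Fin m → Matrix ι ι ℝ) (b : Fin m → ι → ℝ) (c : Fin m → ℝ) :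
    Set ((ι → ℝ) × ℝ) :=
  {p | quadF A0 b0 c0 p.1 ≤ 2 * p.2 ∧ ∀ i, quadF (A i) (b i) (c i) p.1 ≤ 0}

/-- `F` is a face of the convex cone `K`. -/
def IsFaceOf {E : Type*} [Add E] (K F : Set E) : Prop :=
  F ⊆ K ∧ ∀ y ∈ K, ∀ z ∈ K, y + z ∈ F → y ∈ F ∧ z ∈ F

/-- `G` is the minimal face of `K` containing `v`. -/
def IsMinFace {E : Type*} [Add E] (K : Set E) (v : E) (G : Set E) : Prop :=
  IsFaceOf K G ∧ v ∈ G ∧ ∀ G', IsFaceOf K G' → v ∈ G' → G ⊆ G'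

/-- The set of rounding directions `R(x,t)` at a point `p` of a convex set `C`. -/
def Rset {E : Type*} [AddCommGroup E] [Module ℝ E] (C : Set E) (p : E) : Set E :=
  {d | ∃ ε : ℝ, 0 < ε ∧ ∀ s ∈ Set.Icc (-ε) ε, p + s • d ∈ C}

/-- The first-order rounding directions `R'(x,t)`, relative to a face `G` of `Γ°`. -/
def Rset' {ι : Type*} [Fintype ι] {m : ℕ} (A0 : Matrix ι ι ℝ) (b0 : ι → ℝ) (c0 : ℝ)
    (A : Fin m → Matrix ι ι ℝ) (b : Fin m → ι → ℝ) (c : Fin m → ℝ)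
    (x : ι → ℝ) (t : ℝ) (G : Set (ℝ × (Fin m → ℝ))) : Set ((ι → ℝ) × ℝ) :=
  {d | ∀ α : ℝ,
    qVec A0 b0 c0 A b c (x + α • d.1) - (2 * (t + α * d.2)) • e0 ∈ Submodule.span ℝ G}

/-- Orthogonal complement (as a set) of a subset of `ℝ^{1+m}` w.r.t. `ipr`. -/
def orthC {m : ℕ} (G : Set (ℝ × (Fin m → ℝ))) : Set (ℝ × (Fin m → ℝ)) :=
  {v | ∀ w ∈ G, ipr v w = 0}

/-! ### Auxiliary lemmas for `stmt14` -/

section Stmt14Aux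

lemma ipr_comm {m : ℕ} (v w : ℝ × (Fin m → ℝ)) : ipr v w = ipr w v := by
  simp [ipr, dotProduct_comm, mul_comm]

lemma ipr_def' {m : ℕ} (v w : ℝ × (Fin m → ℝ)) :
    ipr v w = v.1 * w.1 + ∑ i, v.2 i * w.2 i := rfl

lemma ipr_add_left {m : ℕ} (u v w : ℝ × (Fin m → ℝ)) :
    ipr (u + v) w = ipr u w + ipr v w := by
  simp [ipr, add_dotProduct]; ring

lemma ipr_smul_left {m : ℕ} (a : ℝ) (u w : ℝ × (Fin m → ℝ)) :
    ipr (a • u) w = a * ipr u w := by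
  simp [ipr, smul_dotProduct, smul_eq_mul]; ring

lemma ipr_sub_left {m : ℕ} (u v w : ℝ × (Fin m → ℝ)) :
    ipr (u - v) w = ipr u w - ipr v w := by
  simp [ipr, sub_dotProduct]; ring

lemma ipr_neg_left {m : ℕ} (u w : ℝ × (Fin m → ℝ)) :
    ipr (-u) w = -ipr u w := by
  simp [ipr, neg_dotProduct]; ring

lemma ipr_e0 {m : ℕ} (w : ℝ × (Fin m → ℝ)) : ipr e0 w = w.1 := by simp [ipr, e0]

/-- linear equivalence with Euclidean space transporting `ipr` to the inner product -/
def toE (m : ℕ) : (ℝ × (Fin m → ℝ)) ≃ₗ[ℝ] EuclideanSpace ℝ (Fin (m+1)) where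
  toFun v := WithLp.toLp 2 (Fin.cons v.1 v.2)
  invFun w := (w 0, fun i => w i.succ)
  map_add' u v := by
    ext i
    rw [PiLp.add_apply]
    cases i using Fin.cases <;> simp
  map_smul' a v := by
    ext i
    rw [PiLp.smul_apply]
    cases i using Fin.cases <;> simp
  left_inv v := by simp
  right_inv w := by
    ext i
    simp only []
    cases i using Fin.cases <;> simp

lemma ipr_eq_inner {m : ℕ} (v w : ℝ × (Fin m → ℝ)) :
    ipr v w = inner ℝ (toE m v) (toE m w) := by
  rw [PiLp.inner_apply]
  simp only [RCLike.inner_apply, starRingEnd_apply, star_trivial]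
  rw [Fin.sum_univ_succ]
  simp [toE, ipr, dotProduct, mul_comm]

lemma mem_span_iff_ipr {m : ℕ} (G : Set (ℝ × (Fin m → ℝ))) (z : ℝ × (Fin m → ℝ)) :
    z ∈ Submodule.span ℝ G ↔ ∀ w ∈ orthC G, ipr z w = 0 := by
  constructor
  · intro hz w hw
    induction hz using Submodule.span_induction with
    | mem g hg => rw [ipr_comm]; exact hw g hg
    | zero => simp [ipr]
    | add u v _ _ hu hv => rw [ipr_add_left, hu, hv, add_zero]
    | smul a u _ hu => rw [ipr_smul_left, hu, mul_zero]
  · intro hz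
    set S : Submodule ℝ (EuclideanSpace ℝ (Fin (m+1))) :=
      Submodule.span ℝ ((toE m) '' G) with hS
    have hmap : (Submodule.span ℝ G).map ((toE m) : (ℝ × (Fin m → ℝ)) →ₗ[ℝ] _) = S := by
      rw [Submodule.map_span]; rfl
    have h1 : toE m z ∈ Sᗮᗮ := by
      rw [Submodule.mem_orthogonal]
      intro u hu
      have hw : (toE m).symm u ∈ orthC G := by
        intro g hg
        rw [ipr_eq_inner, LinearEquiv.apply_symm_apply, real_inner_comm]
        exact (Submodule.mem_orthogonal S u).mp hu _ (Submodule.subset_span ⟨g, hg, rfl⟩)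
      have := hz _ hw
      rw [ipr_eq_inner, LinearEquiv.apply_symm_apply, real_inner_comm] at this
      exact this
    rw [Submodule.orthogonal_orthogonal] at h1
    rw [← hmap] at h1
    rcases h1 with ⟨y, hy, hyz⟩
    have : y = z := (toE m).injective hyz
    rwa [this] at hy

lemma relint_extend {E : Type*} [NormedAddCommGroup E] [NormedSpace ℝ E] {F : Set E}
    {p w : E} (hp : p ∈ intrinsicInterior ℝ F) (hw : w ∈ F) :
    ∃ ε : ℝ, 0 < ε ∧ p + ε • (p - w) ∈ F := by
  obtain ⟨y, hy, rfl⟩ := mem_intrinsicInterior.mp hp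
  have hwspan : w ∈ affineSpan ℝ F := subset_affineSpan ℝ F hw
  set c : ℝ → affineSpan ℝ F := fun r =>
    ⟨AffineMap.lineMap w (y : E) r, AffineMap.lineMap_mem r hwspan y.2⟩ with hc
  have hcont : Continuous c := Continuous.subtype_mk (AffineMap.lineMap_continuous) _
  have hc1 : c 1 = y := by
    apply Subtype.ext
    simp [hc]
  have hopen : IsOpen (c ⁻¹' interior (((↑) : affineSpan ℝ F → E) ⁻¹' F)) :=
    isOpen_interior.preimage hcont
  have h1mem : (1 : ℝ) ∈ c ⁻¹' interior (((↑) : affineSpan ℝ F → E) ⁻¹' F) := by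
    simp only [Set.mem_preimage, hc1]; exact hy
  obtain ⟨ε, hε, hball⟩ := Metric.isOpen_iff.mp hopen 1 h1mem
  refine ⟨ε / 2, by linarith, ?_⟩
  have hmem : (1 + ε / 2 : ℝ) ∈ Metric.ball (1 : ℝ) ε := by
    simp [Real.dist_eq, abs_of_nonneg, abs_of_pos]
    rw [abs_of_nonneg (by linarith)]
    linarith
  have := interior_subset (hball hmem)
  rw [Set.mem_preimage] at this
  have heq : ((c (1 + ε / 2) : affineSpan ℝ F) : E) = ↑y + (ε / 2) • ((y : E) - w) := by
    simp only [hc, AffineMap.lineMap_apply, vsub_eq_sub, vadd_eq_add]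
    module
  rwa [heq] at this

lemma dp_symm {ι : Type*} [Fintype ι] {M : Matrix ι ι ℝ} (hM : M.IsSymm) (u v : ι → ℝ) :
    u ⬝ᵥ M.mulVec v = v ⬝ᵥ M.mulVec u := by
  rw [dotProduct_mulVec, ← Matrix.mulVec_transpose, hM.eq, dotProduct_comm]

lemma quad_expand {ι : Type*} [Fintype ι] {M : Matrix ι ι ℝ} (hM : M.IsSymm)
    (bb : ι → ℝ) (cc : ℝ) (x d : ι → ℝ) (α : ℝ) :
    quadF M bb cc (x + α • d) =
      quadF M bb cc x + α * (2 * ((M.mulVec x + bb) ⬝ᵥ d)) + α ^ 2 * (d ⬝ᵥ M.mulVec d) := by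
  have h := dp_symm hM d x
  simp only [quadF, mulVec_add, mulVec_smul, dotProduct_add, add_dotProduct,
    dotProduct_smul, smul_dotProduct, smul_eq_mul, h]
  rw [show M *ᵥ x ⬝ᵥ d = x ⬝ᵥ M *ᵥ d from (dotProduct_comm _ _).trans h]
  ring

/-- the linear functional `M ↦ y ⬝ᵥ M *ᵥ z`. -/
def qform {ι : Type*} [Fintype ι] (y z : ι → ℝ) : Matrix ι ι ℝ →ₗ[ℝ] ℝ where
  toFun M := y ⬝ᵥ M.mulVec z
  map_add' M N := by simp [add_mulVec, dotProduct_add]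
  map_smul' a M := by simp [smul_mulVec, dotProduct_smul]

def dpl {ι : Type*} [Fintype ι] (z : ι → ℝ) : (ι → ℝ) →ₗ[ℝ] ℝ where
  toFun y := y ⬝ᵥ z
  map_add' u v := by simp [add_dotProduct]
  map_smul' a u := by simp [smul_dotProduct]

lemma qform_Amix {ι : Type*} [Fintype ι] {m : ℕ} (A0 : Matrix ι ι ℝ)
    (A : Fin m → Matrix ι ι ℝ) (g0 : ℝ) (g : Fin m → ℝ) (y z : ι → ℝ) :
    y ⬝ᵥ (Amix A0 A g0 g).mulVec z
      = g0 * (y ⬝ᵥ A0.mulVec z) + ∑ i, g i * (y ⬝ᵥ (A i).mulVec z) := by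
  have : y ⬝ᵥ (Amix A0 A g0 g).mulVec z = qform y z (Amix A0 A g0 g) := rfl
  rw [this, Amix, map_add, _root_.map_smul, map_sum]
  simp [qform]

lemma dpl_bmix {ι : Type*} [Fintype ι] {m : ℕ} (b0 : ι → ℝ) (b : Fin m → ι → ℝ)
    (g : Fin m → ℝ) (z : ι → ℝ) :
    bmix b0 b g ⬝ᵥ z = b0 ⬝ᵥ z + ∑ i, g i * (b i ⬝ᵥ z) := by
  have : bmix b0 b g ⬝ᵥ z = dpl z (bmix b0 b g) := rfl
  rw [this, bmix, map_add, map_sum]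
  simp [dpl]

variable {n m : ℕ}

/-- the linear-coefficient vector -/
def rvec (A0 : Matrix (Fin n) (Fin n) ℝ) (b0 : Fin n → ℝ)
    (A : Fin m → Matrix (Fin n) (Fin n) ℝ) (b : Fin m → Fin n → ℝ)
    (x d1 : Fin n → ℝ) (d2 : ℝ) : ℝ × (Fin m → ℝ) :=
  ((A0.mulVec x + b0) ⬝ᵥ d1 - d2, fun i => ((A i).mulVec x + b i) ⬝ᵥ d1)

/-- the quadratic-coefficient vector -/
def svec (A0 : Matrix (Fin n) (Fin n) ℝ)
    (A : Fin m → Matrix (Fin n) (Fin n) ℝ) (d1 : Fin n → ℝ) : ℝ × (Fin m → ℝ) :=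
  (d1 ⬝ᵥ A0.mulVec d1, fun i => d1 ⬝ᵥ (A i).mulVec d1)

lemma ipr_svec (A0 : Matrix (Fin n) (Fin n) ℝ) (A : Fin m → Matrix (Fin n) (Fin n) ℝ)
    (d1 : Fin n → ℝ) (u : ℝ × (Fin m → ℝ)) :
    ipr u (svec A0 A d1) = d1 ⬝ᵥ (Amix A0 A u.1 u.2).mulVec d1 := by
  rw [qform_Amix]
  simp [ipr, svec, dotProduct]

lemma ipr_rvec (A0 : Matrix (Fin n) (Fin n) ℝ) (b0 : Fin n → ℝ)
    (A : Fin m → Matrix (Fin n) (Fin n) ℝ) (b : Fin m → Fin n → ℝ)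
    (x d1 : Fin n → ℝ) (d2 : ℝ) (g : Fin m → ℝ) :
    ipr (1, g) (rvec A0 b0 A b x d1 d2)
      = ((Amix A0 A 1 g).mulVec x + bmix b0 b g) ⬝ᵥ d1 - d2 := by
  rw [add_dotProduct, dotProduct_comm _ d1, qform_Amix, dpl_bmix, ipr_def']
  simp only [rvec, add_dotProduct]
  rw [Finset.sum_congr rfl (fun i _ => show
      g i * ((A i).mulVec x ⬝ᵥ d1 + b i ⬝ᵥ d1)
        = g i * (d1 ⬝ᵥ (A i).mulVec x) + g i * (b i ⬝ᵥ d1) by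
    rw [dotProduct_comm _ d1]; ring), Finset.sum_add_distrib]
  rw [dotProduct_comm (A0 *ᵥ x) d1]
  ring

lemma ipr_expand (A0 : Matrix (Fin n) (Fin n) ℝ) (b0 : Fin n → ℝ) (c0 : ℝ)
    (A : Fin m → Matrix (Fin n) (Fin n) ℝ) (b : Fin m → Fin n → ℝ) (c : Fin m → ℝ)
    (hA0 : A0.IsSymm) (hA : ∀ i, (A i).IsSymm)
    (x d1 : Fin n → ℝ) (t d2 α : ℝ) (w : ℝ × (Fin m → ℝ)) :
    ipr (qVec A0 b0 c0 A b c (x + α • d1) - (2 * (t + α * d2)) • e0) w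
      = ipr (qVec A0 b0 c0 A b c x - (2 * t) • e0) w
        + α * (2 * ipr w (rvec A0 b0 A b x d1 d2))
        + α ^ 2 * ipr w (svec A0 A d1) := by
  simp only [ipr_sub_left, ipr_smul_left, ipr_e0, ipr_def', qVec, rvec, svec, e0,
    Prod.fst_sub, Prod.snd_sub, Prod.smul_fst, Prod.smul_snd, smul_eq_mul, mul_one,
    smul_zero, Pi.sub_apply, Pi.zero_apply, sub_zero]
  rw [quad_expand hA0 b0 c0 x d1 α]
  rw [show (∑ i, quadF (A i) (b i) (c i) (x + α • d1) * w.2 i)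
      = ∑ i, (quadF (A i) (b i) (c i) x
          + α * (2 * (((A i).mulVec x + b i) ⬝ᵥ d1))
          + α ^ 2 * (d1 ⬝ᵥ (A i).mulVec d1)) * w.2 i from
    Finset.sum_congr rfl fun i _ => by rw [quad_expand (hA i)]]
  rw [show (∑ i, (quadF (A i) (b i) (c i) x
          + α * (2 * (((A i).mulVec x + b i) ⬝ᵥ d1))
          + α ^ 2 * (d1 ⬝ᵥ (A i).mulVec d1)) * w.2 i)
      = ∑ i, (quadF (A i) (b i) (c i) x * w.2 i
          + α * (2 * (w.2 i * (((A i).mulVec x + b i) ⬝ᵥ d1)))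
          + α ^ 2 * (w.2 i * (d1 ⬝ᵥ (A i).mulVec d1))) from
    Finset.sum_congr rfl fun i _ => by ring]
  rw [Finset.sum_add_distrib, Finset.sum_add_distrib]
  rw [show (∑ i, α * (2 * (w.2 i * (((A i).mulVec x + b i) ⬝ᵥ d1))))
      = α * (2 * ∑ i, w.2 i * (((A i).mulVec x + b i) ⬝ᵥ d1)) by
    rw [Finset.mul_sum, Finset.mul_sum]]
  rw [show (∑ i, α ^ 2 * (w.2 i * (d1 ⬝ᵥ (A i).mulVec d1)))
      = α ^ 2 * ∑ i, w.2 i * (d1 ⬝ᵥ (A i).mulVec d1) by rw [Finset.mul_sum]]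
  ring

lemma poly_zero {a b c : ℝ} (h : ∀ α : ℝ, a + α * b + α ^ 2 * c = 0) :
    a = 0 ∧ b = 0 ∧ c = 0 := by
  have h0 := h 0
  have h1 := h 1
  have h2 := h (-1)
  norm_num at h0 h1 h2
  refine ⟨h0, by linarith, by linarith⟩

end Stmt14Aux


/-- under facial exposedness, explicit description of `R'(x,t)`
via `ker(A[f])` with `(1,f)` in the relative interior of `F(x,t)`. -/
theorem stmt14 {n m : ℕ} (A0 : Matrix (Fin n) (Fin n) ℝ) (b0 : Fin n → ℝ) (c0 : ℝ)
    (A : Fin m → Matrix (Fin n) (Fin n) ℝ) (b : Fin m → Fin n → ℝ) (c : Fin m → ℝ)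
    (hA0 : A0.IsSymm) (hA : ∀ i, (A i).IsSymm)
    (hdef : ∃ g ∈ Gamma1 A0 A, (Amix A0 A 1 g).PosDef)
    (hexp : ∀ G : Set (ℝ × (Fin m → ℝ)), IsFaceOf (polarCone (Gamma A0 A)) G →
      ∃ w ∈ Gamma A0 A, G = polarCone (Gamma A0 A) ∩ {v | ipr v w = 0})
    (x : Fin n → ℝ) (t : ℝ) (hxt : (x, t) ∈ SSDP A0 b0 c0 A b c)
    (hsup : IsLUB ((fun g => brkt A0 b0 c0 A b c g x) '' Gamma1 A0 A) (2 * t))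
    (f : Fin m → ℝ)
    (hf : ((1 : ℝ), f) ∈ intrinsicInterior ℝ
      (Gamma A0 A ∩ {v | ipr v (qVec A0 b0 c0 A b c x - (2 * t) • e0) = 0}))
    (G : Set (ℝ × (Fin m → ℝ)))
    (hG : IsMinFace (polarCone (Gamma A0 A))
      (qVec A0 b0 c0 A b c x - (2 * t) • e0) G) :
    Rset' A0 b0 c0 A b c x t G =
      {d : (Fin n → ℝ) × ℝ | (Amix A0 A 1 f).mulVec d.1 = 0 ∧
        ∀ g : Fin m → ℝ, ((1 : ℝ), g) ∈ orthC G →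
          ((Amix A0 A 1 g).mulVec x + bmix b0 b g) ⬝ᵥ d.1 - d.2 = 0} := by
  classical
  set v : ℝ × (Fin m → ℝ) := qVec A0 b0 c0 A b c x - (2 * t) • e0 with hv
  have hvK : v ∈ polarCone (Gamma A0 A) := hxt
  have hvG : v ∈ G := hG.2.1
  have hfF : ((1 : ℝ), f) ∈ Gamma A0 A ∩ {z | ipr z v = 0} := intrinsicInterior_subset hf
  have hGH : G = polarCone (Gamma A0 A) ∩ {z | ipr z ((1 : ℝ), f) = 0} := by
    apply Set.Subset.antisymm
    · refine hG.2.2 _ ⟨Set.inter_subset_left, ?_⟩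
        ⟨hvK, by rw [Set.mem_setOf_eq, ipr_comm]; exact hfF.2⟩
      rintro y hy z hz ⟨hyzK, hyz0⟩
      have hy1 : ipr y ((1:ℝ), f) ≤ 0 := hy _ hfF.1
      have hz1 : ipr z ((1:ℝ), f) ≤ 0 := hz _ hfF.1
      rw [Set.mem_setOf_eq, ipr_add_left] at hyz0
      exact ⟨⟨hy, by rw [Set.mem_setOf_eq]; linarith⟩, ⟨hz, by rw [Set.mem_setOf_eq]; linarith⟩⟩
    · obtain ⟨w0, hw0Γ, hGeq⟩ := hexp G hG.1
      have hvw0 : ipr v w0 = 0 := by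
        have h := hvG; rw [hGeq] at h; exact h.2
      have hw0F : w0 ∈ Gamma A0 A ∩ {z | ipr z v = 0} :=
        ⟨hw0Γ, by rw [Set.mem_setOf_eq, ipr_comm]; exact hvw0⟩
      obtain ⟨ε, hε, hmem⟩ := relint_extend hf hw0F
      rintro z ⟨hzK, hz0⟩
      rw [hGeq]
      refine ⟨hzK, ?_⟩
      rw [Set.mem_setOf_eq] at hz0
      have hz0' : ipr ((1:ℝ), f) z = 0 := by rw [ipr_comm]; exact hz0
      have h1 : ipr z (((1:ℝ), f) + ε • (((1:ℝ), f) - w0)) ≤ 0 := hzK _ hmem.1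
      rw [ipr_comm, ipr_add_left, ipr_smul_left, ipr_sub_left, hz0'] at h1
      have hle : ipr z w0 ≤ 0 := hzK w0 hw0Γ
      have hge : 0 ≤ ipr w0 z := by nlinarith
      have hge' : 0 ≤ ipr z w0 := by rw [ipr_comm]; exact hge
      rw [Set.mem_setOf_eq]
      linarith
  have hfO : ((1:ℝ), f) ∈ orthC G := by
    intro z hz
    rw [hGH] at hz
    rw [ipr_comm]
    exact hz.2
  have hΓf : (Amix A0 A 1 f).PosSemidef := hfF.1.2.2
  ext ⟨d1, d2⟩
  simp only [Rset', Set.mem_setOf_eq]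
  constructor
  · intro hd
    have key : ∀ w ∈ orthC G,
        ipr w (rvec A0 b0 A b x d1 d2) = 0 ∧ ipr w (svec A0 A d1) = 0 := by
      intro w hw
      have hα : ∀ α : ℝ, ipr v w + α * (2 * ipr w (rvec A0 b0 A b x d1 d2))
          + α ^ 2 * ipr w (svec A0 A d1) = 0 := by
        intro α
        rw [← ipr_expand A0 b0 c0 A b c hA0 hA x d1 t d2 α w]
        exact (mem_span_iff_ipr G _).mp (hd α) w hw
      have hα' : ∀ α : ℝ, ipr v w + α * (2 * ipr w (rvec A0 b0 A b x d1 d2))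
          + α ^ 2 * ipr w (svec A0 A d1) = 0 := hα
      obtain ⟨-, h1, h2⟩ := poly_zero hα'
      exact ⟨by linarith, h2⟩
    constructor
    · have h2 := (key _ hfO).2
      rw [ipr_svec] at h2
      have h2' : d1 ⬝ᵥ (Amix A0 A 1 f).mulVec d1 = 0 := h2
      exact (hΓf.dotProduct_mulVec_zero_iff d1).mp (by rwa [star_trivial])
    · intro g hg
      have h1 := (key _ hg).1
      rwa [ipr_rvec] at h1
  · rintro ⟨hker, hlin⟩ α
    rw [mem_span_iff_ipr]
    intro w hw
    rw [ipr_expand A0 b0 c0 A b c hA0 hA x d1 t d2 α w]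
    have hv0 : ipr v w = 0 := by rw [ipr_comm]; exact hw v hvG
    have hfr : ipr ((1:ℝ), f) (rvec A0 b0 A b x d1 d2) = 0 := by
      rw [ipr_rvec]; exact hlin f hfO
    set u : Fin m → ℝ := w.2 - w.1 • f with hu
    have horthu : ((1:ℝ), f + u) ∈ orthC G := by
      intro z hz
      have e : ((1:ℝ), f + u) = w + ((1:ℝ), f) - w.1 • ((1:ℝ), f) := by
        refine Prod.ext ?_ ?_
        · simp [smul_eq_mul]
        · simp only [hu, Prod.snd_sub, Prod.snd_add, Prod.smul_snd]
          module
      rw [e, ipr_sub_left, ipr_add_left, ipr_smul_left, hw z hz, hfO z hz]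
      ring
    have hfur : ipr ((1:ℝ), f + u) (rvec A0 b0 A b x d1 d2) = 0 := by
      rw [ipr_rvec]; exact hlin (f + u) horthu
    have hwr : ipr w (rvec A0 b0 A b x d1 d2) = 0 := by
      have e : w = w.1 • ((1:ℝ), f) + (((1:ℝ), f + u) - ((1:ℝ), f)) := by
        refine Prod.ext ?_ ?_
        · simp [smul_eq_mul]
        · simp only [hu, Prod.snd_add, Prod.snd_sub, Prod.smul_snd]
          module
      rw [e, ipr_add_left, ipr_smul_left, ipr_sub_left, hfr, hfur]
      ring
    have hsG : -(svec A0 A d1) ∈ G := by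
      rw [hGH]
      constructor
      · intro uu huu
        rw [ipr_neg_left, ipr_comm, ipr_svec]
        have h0 : 0 ≤ d1 ⬝ᵥ (Amix A0 A uu.1 uu.2).mulVec d1 := by
          have h := huu.2.2.dotProduct_mulVec_nonneg d1
          rwa [star_trivial] at h
        linarith
      · rw [Set.mem_setOf_eq, ipr_neg_left, ipr_comm, ipr_svec]
        have e : Amix A0 A ((1:ℝ),f).1 ((1:ℝ),f).2 = Amix A0 A 1 f := rfl
        rw [e, hker, dotProduct_zero, neg_zero]
    have hws : ipr w (svec A0 A d1) = 0 := by
      have h := hw _ hsG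
      rw [ipr_comm, ipr_neg_left] at h
      have h2 : ipr (svec A0 A d1) w = 0 := by linarith
      rw [ipr_comm]; exact h2
    rw [hv0, hwr, hws]
    ring
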